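/- For s ∈ ℂ with Im(s) > 0 and x ∈ [-1,1], defining R₂(x;s) := (|s-1|+|s|)x² - |s| + i√((|s-1|+|s|)²-1)·x√(1-x²), we have R₂(x;s)·conj(R₂(x;s)) = (x² - s)(x² - s*), provided |s-1| + |s| ≥ 1. -/

import Mathlib

open Complex

theorem R2_norm_sq (s : ℂ) (hs : 0 < s.im) (x : ℝ) (hx : x ∈ Set.Icc (-1 : ℝ) 1)
    (ha : 1 ≤ ‖s - 1‖ + ‖s‖) :
    letI a : ℝ := ‖s - 1‖ + ‖s‖
    ((a * x ^ 2 - ‖s‖ : ℝ) +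
        I * Real.sqrt (a ^ 2 - 1) * x * Real.sqrt (1 - x ^ 2)) *
      (starRingEnd ℂ) ((a * x ^ 2 - ‖s‖ : ℝ) +
        I * Real.sqrt (a ^ 2 - 1) * x * Real.sqrt (1 - x ^ 2)) =
    ((x : ℂ) ^ 2 - s) * ((x : ℂ) ^ 2 - (starRingEnd ℂ) s) := by
  have hx1 : x ^ 2 ≤ 1 := by nlinarith [hx.1, hx.2]
  set u := Real.sqrt ((‖s - 1‖ + ‖s‖) ^ 2 - 1) with hu
  set v := Real.sqrt (1 - x ^ 2) with hv
  have h1 : u ^ 2 = (‖s - 1‖ + ‖s‖) ^ 2 - 1 :=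
    Real.sq_sqrt (by nlinarith)
  have h2 : v ^ 2 = 1 - x ^ 2 := Real.sq_sqrt (by linarith)
  have hb : ‖s - 1‖ ^ 2 = ‖s‖ ^ 2 - 2 * s.re + 1 := by
    rw [Complex.sq_norm, Complex.sq_norm, Complex.normSq_apply, Complex.normSq_apply]
    simp [Complex.sub_re, Complex.sub_im]
    ring
  have hsabs : ‖s‖ ^ 2 = s.re ^ 2 + s.im ^ 2 := by
    rw [Complex.sq_norm, Complex.normSq_apply]; ring
  apply Complex.ext <;>
    simp [Complex.mul_re, Complex.mul_im, Complex.add_re, Complex.add_im,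
      Complex.sub_re, Complex.sub_im, Complex.conj_re, Complex.conj_im, ← Complex.ofReal_pow]
  linear_combination (x^2 * v^2) * h1 +
    (((‖s - 1‖ + ‖s‖)^2 - 1) * x^2) * h2 + x^2 * hb + hsabs
  ring
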